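/- The minimum AWGN pseudoweight over all nonzero elements of the fundamental cone K(H) of a 0-1 matrix H is a lower bound on the minimum Hamming distance of the binary code C = ker H: for every nonzero codeword c ∈ C, w_p(c) equals its Hamming weight, hence inf over nonzero p ∈ K(H) of w_p(p) ≤ d_min(C), provided C contains a nonzero codeword. -/

import Mathlib

noncomputable def pseudoweight {n : ℕ} (p : Fin n → ℝ) : ℝ :=
  (∑ i, p i) ^ 2 / ∑ i, (p i) ^ 2

def fundamentalCone {m n : ℕ} (H : Fin m → Fin n → ℝ) : Set (Fin n → ℝ) :=
  { p | (∀ i, 0 ≤ p i) ∧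
        ∀ j i', (∑ i ∈ Finset.univ.erase i', H j i * p i) ≥ H j i' * p i' }

/-- Embedding of a binary vector into `ℝⁿ` as a 0-1 vector. -/
def embed {n : ℕ} (c : Fin n → ZMod 2) : Fin n → ℝ :=
  fun i => if c i = 1 then 1 else 0

lemma zmod2_cases (x : ZMod 2) : x = 0 ∨ x = 1 := by revert x; decide

lemma pw_eq {n : ℕ} (c : Fin n → ZMod 2) (hc0 : c ≠ 0) :
    pseudoweight (embed c) = (Finset.univ.filter (fun i => c i ≠ 0)).card := by
  have hceq : ∀ i, (c i ≠ 0) ↔ (c i = 1) := by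
    intro i; rcases zmod2_cases (c i) with h | h <;> simp [h]
  have hfil : Finset.univ.filter (fun i => c i ≠ 0) =
      Finset.univ.filter (fun i => c i = 1) := by
    apply Finset.filter_congr; intro i _; simp [hceq i]
  have hsum : ∑ i, embed c i = ((Finset.univ.filter (fun i => c i ≠ 0)).card : ℝ) := by
    rw [hfil]; simp [embed, Finset.sum_boole]
  have hsq : ∑ i, (embed c i) ^ 2 = ((Finset.univ.filter (fun i => c i ≠ 0)).card : ℝ) := by
    rw [hfil]
    have : ∀ i, (embed c i) ^ 2 = if c i = 1 then (1:ℝ) else 0 := by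
      intro i; simp only [embed]; split <;> norm_num
    simp [this, Finset.sum_boole]
  have hk : ((Finset.univ.filter (fun i => c i ≠ 0)).card : ℝ) ≠ 0 := by
    have : ∃ i, c i ≠ 0 := by
      by_contra h; push_neg at h; exact hc0 (funext fun i => h i)
    obtain ⟨i, hi⟩ := this
    have : (Finset.univ.filter (fun i => c i ≠ 0)).Nonempty :=
      ⟨i, Finset.mem_filter.mpr ⟨Finset.mem_univ i, hi⟩⟩
    simpa using Finset.card_ne_zero_of_mem this.choose_spec
  rw [pseudoweight, hsum, hsq, sq, mul_div_assoc, div_self hk, mul_one]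

lemma embed_in_cone {m n : ℕ} (H : Fin m → Fin n → ZMod 2) (c : Fin n → ZMod 2)
    (hc : ∀ j, ∑ i, H j i * c i = 0) :
    embed c ∈ fundamentalCone (fun j i => if H j i = 1 then (1 : ℝ) else 0) := by
  constructor
  · intro i; simp only [embed]; split <;> norm_num
  · intro j i'
    have hterm : ∀ i, (if H j i = 1 then (1:ℝ) else 0) * embed c i
        = if H j i * c i = 1 then (1:ℝ) else 0 := by
      intro i
      rcases zmod2_cases (H j i) with h | h <;> rcases zmod2_cases (c i) with h2 | h2 <;>
        simp [embed, h, h2]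
    simp only [hterm]
    by_cases hfi : H j i' * c i' = 1
    · have hsum0 : H j i' * c i' + ∑ i ∈ Finset.univ.erase i', H j i * c i = 0 := by
        rw [Finset.add_sum_erase _ (fun i => H j i * c i) (Finset.mem_univ i')]
        exact hc j
      have herase : ∑ i ∈ Finset.univ.erase i', H j i * c i = 1 := by
        rw [hfi] at hsum0
        have := eq_neg_of_add_eq_zero_right hsum0
        rw [this]; decide
      have hne0 : ∑ i ∈ Finset.univ.erase i', H j i * c i ≠ 0 := by
        rw [herase]; decide
      obtain ⟨i0, hi0mem, hi0⟩ := Finset.exists_ne_zero_of_sum_ne_zero hne0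
      have hi01 : H j i0 * c i0 = 1 := (zmod2_cases _).resolve_left hi0
      have := Finset.single_le_sum
        (f := fun i => if H j i * c i = 1 then (1:ℝ) else 0)
        (fun i _ => by split <;> norm_num) hi0mem
      simp only [hi01, if_pos] at this
      rw [if_pos hfi]
      simpa using this
    · rw [if_neg hfi]
      exact Finset.sum_nonneg fun i _ => by split <;> norm_num

theorem min_pseudoweight_le_dmin {m n : ℕ} (H : Fin m → Fin n → ZMod 2)
    (C : Set (Fin n → ZMod 2)) (hC : C = {c | ∀ j, ∑ i, H j i * c i = 0})
    (hne : ∃ c ∈ C, c ≠ 0) :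
    (∀ c ∈ C, c ≠ 0 →
      pseudoweight (embed c) =
        (Finset.univ.filter (fun i => c i ≠ 0)).card) ∧
    sInf (pseudoweight ''
        {p ∈ fundamentalCone (fun j i => if H j i = 1 then (1 : ℝ) else 0) | p ≠ 0}) ≤
      sInf ((fun c => ((Finset.univ.filter (fun i => c i ≠ 0)).card : ℝ)) ''
        {c ∈ C | c ≠ 0}) := by
  refine ⟨fun c _ hc0 => pw_eq c hc0, ?_⟩
  apply csInf_le_csInf
  · refine ⟨0, ?_⟩
    rintro x ⟨p, _, rfl⟩
    exact div_nonneg (sq_nonneg _) (Finset.sum_nonneg fun i _ => sq_nonneg _)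
  · obtain ⟨c, hcC, hc0⟩ := hne
    exact ⟨_, c, ⟨hcC, hc0⟩, rfl⟩
  · rintro x ⟨c, ⟨hcC, hc0⟩, rfl⟩
    refine ⟨embed c, ⟨embed_in_cone H c ?_, ?_⟩, pw_eq c hc0⟩
    · rw [hC] at hcC; exact hcC
    · have : ∃ i, c i ≠ 0 := by
        by_contra h; push_neg at h; exact hc0 (funext fun i => h i)
      obtain ⟨i, hi⟩ := this
      have hi1 : c i = 1 := (zmod2_cases _).resolve_left hi
      intro h
      have := congrFun h i
      simp [embed, hi1] at this
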